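/- Let n ≥ 1, let P ∈ ℝ^{n×n} be a symmetric positive definite matrix, and let D = diag(d₁, …, dₙ) be a diagonal matrix with each dᵢ ∈ {1, −1}. If every complex eigenvalue of the matrix P·D is a positive real number, then D = Iₙ (i.e., dᵢ = 1 for all i). -/

import Mathlib

open Matrix Polynomial

/-- Characteristic polynomial is invariant under conjugation. -/
lemma my_charpoly_conj {m : Type*} [Fintype m] [DecidableEq m] (C A : Matrix m m ℝ)
    (hC : IsUnit C.det) : (C * A * C⁻¹).charpoly = A.charpoly := by
  have h1 : C * C⁻¹ = 1 := mul_nonsing_inv C hC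
  set f : Matrix m m ℝ →+* Matrix m m ℝ[X] := (Polynomial.C : ℝ →+* ℝ[X]).mapMatrix with hf
  have key : charmatrix (C * A * C⁻¹) = f C * charmatrix A * f C⁻¹ := by
    have hcomm : scalar m (X : ℝ[X]) * f C = f C * scalar m (X : ℝ[X]) :=
      (scalar_commute (X : ℝ[X]) (fun r' => mul_comm _ _) (f C)).eq
    calc charmatrix (C * A * C⁻¹)
        = scalar m (X : ℝ[X]) - f (C * A * C⁻¹) := rfl
      _ = scalar m (X : ℝ[X]) * (f C * f C⁻¹) - f C * f A * f C⁻¹ := by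
          rw [_root_.map_mul, _root_.map_mul, ← _root_.map_mul f C C⁻¹, h1, _root_.map_one, mul_one]
      _ = f C * scalar m (X : ℝ[X]) * f C⁻¹ - f C * f A * f C⁻¹ := by
          rw [← mul_assoc, hcomm]
      _ = f C * (scalar m (X : ℝ[X]) - f A) * f C⁻¹ := by
          rw [mul_sub, sub_mul]
      _ = f C * charmatrix A * f C⁻¹ := rfl
  have hdet : (f C).det * (f C⁻¹).det = 1 := by
    rw [← RingHom.map_det, ← RingHom.map_det, ← _root_.map_mul, ← det_mul, h1, det_one, _root_.map_one]
  calc (C * A * C⁻¹).charpoly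
      = ((f C) * charmatrix A * (f C⁻¹)).det := by rw [Matrix.charpoly, key]
    _ = (f C).det * (charmatrix A).det * (f C⁻¹).det := by rw [det_mul, det_mul]
    _ = (charmatrix A).det * ((f C).det * (f C⁻¹).det) := by ring
    _ = A.charpoly := by rw [hdet, mul_one, Matrix.charpoly]

/-- Evaluation of the characteristic polynomial. -/
lemma my_eval_charpoly {m : Type*} [Fintype m] [DecidableEq m] (A : Matrix m m ℝ) (μ : ℝ) :
    A.charpoly.eval μ = (scalar m μ - A).det := by
  rw [Matrix.charpoly, eval_det, matPolyEquiv_charmatrix]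
  simp

/-- if `P` is real symmetric positive definite, `D = diag d` with
each `dᵢ ∈ {1, −1}`, and every complex eigenvalue of `P·D` is a positive real
number, then `D = Iₙ`. -/
theorem statement12 (n : ℕ) (hn : 1 ≤ n) (P : Matrix (Fin n) (Fin n) ℝ)
    (hSymm : P.IsSymm) (hPos : P.PosDef) (d : Fin n → ℝ)
    (hd : ∀ i, d i = 1 ∨ d i = -1)
    (heig : ∀ μ : ℂ,
      ((P * Matrix.diagonal d).charpoly.map (algebraMap ℝ ℂ)).IsRoot μ →
        ∃ r : ℝ, 0 < r ∧ μ = (r : ℂ)) :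
    Matrix.diagonal d = (1 : Matrix (Fin n) (Fin n) ℝ) := by
  have hPsd := hPos.posSemidef
  open scoped MatrixOrder in
  set Q := CFC.sqrt P with hQ
  open scoped MatrixOrder in
  have hQps : Q.PosSemidef := (CFC.sqrt_nonneg P).posSemidef
  open scoped MatrixOrder in
  have hQQ : Q * Q = P := CFC.sqrt_mul_sqrt_self P hPsd.nonneg
  have hQdet : IsUnit Q.det := by
    have : Q.det * Q.det = P.det := by rw [← det_mul, hQQ]
    have hP := hPos.det_pos
    have : Q.det ≠ 0 := by
      intro h
      rw [h, mul_zero] at this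
      exact hP.ne this
    exact this.isUnit
  have hQQi : Q * Q⁻¹ = 1 := mul_nonsing_inv Q hQdet
  have hQiQ : Q⁻¹ * Q = 1 := nonsing_inv_mul Q hQdet
  set M := Q * Matrix.diagonal d * Q with hM
  -- P * D is conjugate to M
  have hconj : P * Matrix.diagonal d = Q * M * Q⁻¹ := by
    rw [hM]
    calc P * Matrix.diagonal d = Q * Q * Matrix.diagonal d * (Q * Q⁻¹) := by
          rw [hQQi, mul_one, hQQ]
      _ = Q * (Q * Matrix.diagonal d * Q) * Q⁻¹ := by
          simp only [mul_assoc]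
  have hchar : (P * Matrix.diagonal d).charpoly = M.charpoly := by
    rw [hconj, my_charpoly_conj _ _ hQdet]
  -- M is hermitian
  have hQH : Qᴴ = Q := hQps.1
  have hMh : M.IsHermitian := by
    have := isHermitian_conjTranspose_mul_mul Q (isHermitian_diagonal_of_self_adjoint d
      (funext fun i => by simp [star]))
    rwa [hQH] at this
  -- the eigenvalues of M are nonnegative
  have hev : ∀ i, 0 ≤ hMh.eigenvalues i := by
    intro i
    have hspec : hMh.eigenvalues i ∈ spectrum ℝ M := hMh.eigenvalues_mem_spectrum_real i
    set μ := hMh.eigenvalues i with hμ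
    rw [spectrum.mem_iff] at hspec
    have hdet0 : (scalar (Fin n) μ - M).det = 0 := by
      by_contra h
      exact hspec ((isUnit_iff_isUnit_det _).2 (Ne.isUnit h))
    have hroot : M.charpoly.IsRoot μ := by
      rw [Polynomial.IsRoot, my_eval_charpoly]
      · exact hdet0
    have hrootC : ((P * Matrix.diagonal d).charpoly.map (algebraMap ℝ ℂ)).IsRoot (μ : ℂ) := by
      rw [hchar, Polynomial.IsRoot, Polynomial.eval_map]
      show Polynomial.eval₂ (algebraMap ℝ ℂ) (algebraMap ℝ ℂ μ) M.charpoly = 0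
      rw [Polynomial.eval₂_at_apply, hroot.eq_zero, map_zero]
    obtain ⟨r, hr, hμr⟩ := heig _ hrootC
    have : μ = r := by exact_mod_cast hμr
    rw [this]
    exact hr.le
  -- M is positive semidefinite
  have hMpsd : M.PosSemidef := hMh.posSemidef_iff_eigenvalues_nonneg.mpr hev
  -- D = Q⁻¹ * M * Q⁻¹ is positive semidefinite
  have hDeq : Matrix.diagonal d = Q⁻¹ * M * Q⁻¹ := by
    rw [hM]
    calc Matrix.diagonal d = (Q⁻¹ * Q) * Matrix.diagonal d * (Q * Q⁻¹) := by
          rw [hQiQ, hQQi, one_mul, mul_one]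
      _ = Q⁻¹ * (Q * Matrix.diagonal d * Q) * Q⁻¹ := by simp only [mul_assoc]
  have hQiH : (Q⁻¹)ᴴ = Q⁻¹ := by
    rw [conjTranspose_nonsing_inv, hQH]
  have hDpsd : (Matrix.diagonal d).PosSemidef := by
    rw [hDeq]
    have := hMpsd.conjTranspose_mul_mul_same Q⁻¹
    rwa [hQiH] at this
  have hdnn : ∀ i, 0 ≤ d i := Matrix.posSemidef_diagonal_iff.mp hDpsd
  have : d = fun _ => 1 := by
    funext i
    rcases hd i with h | h
    · exact h
    · exfalso; have := hdnn i; rw [h] at this; linarith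
  rw [this]
  exact Matrix.diagonal_one
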